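/- arXiv:1910.01181 — 6 statements merged into one kernel-verified Lean document; each statement's English description precedes it below -/
import Mathlib

section
/- The composition of two autarkies φ and ψ for a CNF formula F, defined as the partial assignment acting like ψ on the variables in the domain of ψ and like φ on the remaining variables in the domain of φ, is again an autarky for F. -/
/-- Variables are natural numbers. -/
abbrev Var := Nat
/-- A literal is a variable with a polarity. -/
abbrev Lit := Var × Bool
/-- A clause is a set of literals. -/
abbrev Clause := Set Lit
/-- A CNF formula is a set of clauses. -/
abbrev CNF := Set Clause
/-- A partial assignment maps variables to optional Boolean values. -/
abbrev PAssign := Var → Option Bool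

/-- φ touches C if some variable of C is in the domain of φ. -/
def touches (phi : PAssign) (C : Clause) : Prop := ∃ l ∈ C, phi l.1 ≠ none
/-- φ satisfies C if some literal of C is made true by φ. -/
def psat (phi : PAssign) (C : Clause) : Prop := ∃ l ∈ C, phi l.1 = some l.2
/-- φ is an autarky for F: every clause of F touched by φ is satisfied by φ. -/
def Autarky (phi : PAssign) (F : CNF) : Prop := ∀ C ∈ F, touches phi C → psat phi C
/-- F[φ]: the clauses of F not satisfied by φ. -/
def reduce (F : CNF) (phi : PAssign) : CNF := {C ∈ F | ¬ psat phi C}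
/-- A total assignment θ satisfies a clause. -/
def csat (theta : Var → Bool) (C : Clause) : Prop := ∃ l ∈ C, theta l.1 = l.2
/-- Satisfiability of a CNF. -/
def Sat (F : CNF) : Prop := ∃ theta : Var → Bool, ∀ C ∈ F, csat theta C
/-- Composition ψ∘φ: agrees with ψ on dom ψ, with φ on dom φ \ dom ψ. -/
def comp (psi phi : PAssign) : PAssign := fun v => (psi v).elim (phi v) some
/-- The empty (trivial) partial assignment. -/
def emptyPA : PAssign := fun _ => none
/-- The variables occurring in F. -/
def varsOf (F : CNF) : Set Var := {v | ∃ C ∈ F, ∃ l ∈ C, l.1 = v}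
/-- F is lean: every autarky for F is trivial on the variables of F. -/
def IsLean (F : CNF) : Prop := ∀ phi : PAssign, Autarky phi F → ∀ v ∈ varsOf F, phi v = none
/-- The lean kernel: union of all lean subformulas. -/
def leanKernel (F : CNF) : CNF := ⋃₀ {G | G ⊆ F ∧ IsLean G}

theorem autarky_comp (F : CNF) (phi psi : PAssign)
    (h1 : Autarky phi F) (h2 : Autarky psi F) : Autarky (comp psi phi) F := by
  intro C hC htouch
  by_cases hpsi : touches psi C
  · obtain ⟨l, hl, hsat⟩ := h2 C hC hpsi
    exact ⟨l, hl, by simp [comp, hsat]⟩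
  · simp only [touches, not_exists, not_and, not_not] at hpsi
    have hphi : touches phi C := by
      obtain ⟨l, hl, hne⟩ := htouch
      refine ⟨l, hl, ?_⟩
      have := hpsi l hl
      simpa [comp, this] using hne
    obtain ⟨l, hl, hsat⟩ := h1 C hC hphi
    exact ⟨l, hl, by simp [comp, hpsi l hl, hsat]⟩
end

section
/- Autarky reduction on CNF formulas is confluent: repeatedly removing the clauses satisfied by some nontrivial autarky, in any order, terminates with the same final formula, namely the largest lean subformula (lean kernel) of F. -/
/-- One autarky-reduction step by a nontrivial autarky, changing the formula. -/
def Red (F F' : CNF) : Prop :=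
  ∃ phi : PAssign, (∃ v, phi v ≠ none) ∧ Autarky phi F ∧ F' = reduce F phi ∧ F' ≠ F

theorem reduce_subset (F : CNF) (phi : PAssign) : reduce F phi ⊆ F := fun _ hC => hC.1

/-- A lean subformula is untouched by any autarky of the whole formula. -/
theorem lean_untouched {G F : CNF} (hGF : G ⊆ F) (hG : IsLean G) {phi : PAssign}
    (hphi : Autarky phi F) : ∀ C ∈ G, ¬ psat phi C := by
  classical
  set phi' : PAssign := fun v => if v ∈ varsOf G then phi v else none with hphi'
  have haut : Autarky phi' G := by
    rintro C hC ⟨l, hl, hne⟩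
    have hv : l.1 ∈ varsOf G := ⟨C, hC, l, hl, rfl⟩
    have hne' : phi l.1 ≠ none := by simpa [hphi', hv] using hne
    obtain ⟨l', hl', heq⟩ := hphi C (hGF hC) ⟨l, hl, hne'⟩
    have hv' : l'.1 ∈ varsOf G := ⟨C, hC, l', hl', rfl⟩
    exact ⟨l', hl', by simpa [hphi', hv'] using heq⟩
  rintro C hC ⟨l, hl, heq⟩
  have hv : l.1 ∈ varsOf G := ⟨C, hC, l, hl, rfl⟩
  have h0 := hG phi' haut l.1 hv
  rw [hphi'] at h0
  simp only [hv, if_true] at h0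
  rw [h0] at heq
  exact Option.some_ne_none _ heq.symm

theorem normal_iff_lean (F : CNF) : (∀ G, ¬ Red F G) ↔ IsLean F := by
  constructor
  · intro h phi haut v hv
    by_contra hne
    obtain ⟨C, hC, l, hl, hlv⟩ := hv
    have htouch : touches phi C := ⟨l, hl, by rw [hlv]; exact hne⟩
    have hps := haut C hC htouch
    refine h (reduce F phi) ⟨phi, ⟨v, hne⟩, haut, rfl, ?_⟩
    intro heq
    have : C ∈ reduce F phi := by rw [heq]; exact hC
    exact this.2 hps
  · rintro hlean G ⟨phi, hnt, haut, hGeq, hGne⟩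
    apply hGne
    rw [hGeq]
    ext C
    simp only [reduce, Set.mem_setOf_eq]
    constructor
    · exact fun h => h.1
    · intro hC
      refine ⟨hC, ?_⟩
      rintro ⟨l, hl, heq⟩
      have hv : l.1 ∈ varsOf F := ⟨C, hC, l, hl, rfl⟩
      rw [hlean phi haut l.1 hv] at heq
      exact Option.some_ne_none _ heq.symm

theorem leanKernel_subset (F : CNF) : leanKernel F ⊆ F := by
  rintro C ⟨G, ⟨hGF, _⟩, hCG⟩; exact hGF hCG

theorem kernel_red {F F' : CNF} (h : Red F F') : leanKernel F' = leanKernel F := by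
  obtain ⟨phi, hnt, haut, hEq, hne⟩ := h
  apply Set.Subset.antisymm
  · rintro C ⟨G, ⟨hGF', hG⟩, hCG⟩
    exact ⟨G, ⟨hGF'.trans (hEq ▸ reduce_subset F phi), hG⟩, hCG⟩
  · rintro C ⟨G, ⟨hGF, hG⟩, hCG⟩
    refine ⟨G, ⟨?_, hG⟩, hCG⟩
    intro D hD
    rw [hEq]
    exact ⟨hGF hD, lean_untouched hGF hG haut D hD⟩

theorem kernel_rtg {F F' : CNF} (h : Relation.ReflTransGen Red F F') :
    leanKernel F' = leanKernel F := by
  induction h with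
  | refl => rfl
  | tail _ hstep ih => exact (kernel_red hstep).trans ih

theorem lean_eq_kernel {F : CNF} (h : IsLean F) : F = leanKernel F :=
  Set.Subset.antisymm (fun C hC => ⟨F, ⟨Set.Subset.refl F, h⟩, hC⟩) (leanKernel_subset F)

theorem exists_nf : ∀ n (F : CNF) (hF : F.Finite), hF.toFinset.card = n →
    ∃ F', Relation.ReflTransGen Red F F' ∧ ∀ G, ¬ Red F' G := by
  intro n
  induction n using Nat.strong_induction_on with
  | _ n ih =>
    intro F hF hcard
    by_cases h : ∃ G, Red F G
    · obtain ⟨G, hG⟩ := h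
      have hG' := hG
      obtain ⟨phi, -, -, hEq, hne⟩ := hG'
      have hGF : G ⊆ F := hEq ▸ reduce_subset F phi
      have hGfin : G.Finite := hF.subset hGF
      have hss : hGfin.toFinset ⊂ hF.toFinset := by
        rw [Set.Finite.toFinset_ssubset_toFinset]
        exact ⟨hGF, fun h2 => hne (Set.Subset.antisymm hGF h2)⟩
      have hlt : hGfin.toFinset.card < n := hcard ▸ Finset.card_lt_card hss
      obtain ⟨F', h1, h2⟩ := ih _ hlt G hGfin rfl
      exact ⟨F', Relation.ReflTransGen.head hG h1, h2⟩
    · exact ⟨F, Relation.ReflTransGen.refl, fun G hG => h ⟨G, hG⟩⟩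

theorem autarky_reduction_confluent (F : CNF) (hF : F.Finite) :
    (∃ F', Relation.ReflTransGen Red F F' ∧ ∀ G, ¬ Red F' G) ∧
    (∀ F₁ F₂, Relation.ReflTransGen Red F F₁ → (∀ G, ¬ Red F₁ G) →
        Relation.ReflTransGen Red F F₂ → (∀ G, ¬ Red F₂ G) →
      F₁ = F₂ ∧ F₁ = leanKernel F) := by
  constructor
  · exact exists_nf _ F hF rfl
  · intro F₁ F₂ h1 hn1 h2 hn2
    have e1 : F₁ = leanKernel F :=
      (lean_eq_kernel ((normal_iff_lean F₁).1 hn1)).trans (kernel_rtg h1)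
    have e2 : F₂ = leanKernel F :=
      (lean_eq_kernel ((normal_iff_lean F₂).1 hn2)).trans (kernel_rtg h2)
    exact ⟨e1.trans e2.symm, e1⟩
end

section
/- Every CNF formula F has a largest lean subformula (the lean kernel): the union of all lean subformulas of F is itself lean, and hence is the unique maximal lean subformula of F. -/
theorem lean_kernel_largest (F : CNF) :
    leanKernel F ⊆ F ∧ IsLean (leanKernel F) ∧
    ∀ G, G ⊆ F → IsLean G → G ⊆ leanKernel F := by
  refine ⟨?_, ?_, ?_⟩
  · rintro C ⟨G, ⟨hGF, -⟩, hCG⟩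
    exact hGF hCG
  · intro phi hphi v hv
    obtain ⟨C, ⟨G, ⟨hGF, hGlean⟩, hCG⟩, l, hlC, hlv⟩ := hv
    refine hGlean phi ?_ v ⟨C, hCG, l, hlC, hlv⟩
    intro D hD hT
    exact hphi D ⟨G, ⟨hGF, hGlean⟩, hD⟩ hT
  · intro G hGF hGlean C hCG
    exact ⟨G, ⟨hGF, hGlean⟩, hCG⟩
end

section
/- A CNF formula F is lean if and only if for every clause C ∈ F there is no autarky of F satisfying C; equivalently, the lean kernel of F equals the set of clauses of F not satisfied by any autarky of F. -/
namespace AutAux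
open Classical

lemma psat_touches {phi : PAssign} {C : Clause} (h : psat phi C) : touches phi C := by
  obtain ⟨l, hl, he⟩ := h
  exact ⟨l, hl, by simp [he]⟩

lemma comp_eq_of_none {psi phi : PAssign} {v : Var} (h : psi v = none) :
    comp psi phi v = phi v := by simp [comp, h]

lemma comp_eq_of_some {psi phi : PAssign} {v : Var} {b : Bool} (h : psi v = some b) :
    comp psi phi v = some b := by simp [comp, h]

noncomputable def restrict (phi : PAssign) (V : Set Var) : PAssign :=
  fun v => if v ∈ V then phi v else none

lemma restrict_mem {phi : PAssign} {V : Set Var} {v : Var} (h : v ∈ V) :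
    restrict phi V v = phi v := by simp [restrict, h]

lemma restrict_autarky {F G : CNF} {phi : PAssign} (hGF : G ⊆ F)
    (h : Autarky phi F) : Autarky (restrict phi (varsOf G)) G := by
  intro C hC htouch
  obtain ⟨l, hl, hne⟩ := htouch
  have hphi : phi l.1 ≠ none := by
    intro h0
    apply hne
    unfold restrict
    split <;> simp [h0]
  obtain ⟨l', hl', he⟩ := h C (hGF hC) ⟨l, hl, hphi⟩
  have hv : l'.1 ∈ varsOf G := ⟨C, hC, l', hl', rfl⟩
  exact ⟨l', hl', by rw [restrict_mem hv]; exact he⟩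

noncomputable def pa (s : Set Lit) : PAssign :=
  fun v => if h : ∃ b, (v, b) ∈ s then some h.choose else none

def Func (s : Set Lit) : Prop := ∀ v b b', (v, b) ∈ s → (v, b') ∈ s → b = b'

lemma pa_some {s : Set Lit} (hs : Func s) {v : Var} {b : Bool} :
    pa s v = some b ↔ (v, b) ∈ s := by
  unfold pa
  constructor
  · intro h
    split at h
    · rename_i h'
      obtain rfl : h'.choose = b := by injection h
      exact h'.choose_spec
    · simp at h
  · intro h
    have h' : ∃ b, (v, b) ∈ s := ⟨b, h⟩
    rw [dif_pos h']
    exact congrArg some (hs v _ _ h'.choose_spec h)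

lemma pa_ne_none {s : Set Lit} {v : Var} : pa s v ≠ none ↔ ∃ b, (v, b) ∈ s := by
  unfold pa; split <;> simp_all

def graph (phi : PAssign) : Set Lit := {l | phi l.1 = some l.2}

lemma func_graph (phi : PAssign) : Func (graph phi) := by
  intro v b b' hb hb'
  simp only [graph, Set.mem_setOf_eq] at hb hb'
  rw [hb] at hb'; injection hb'

lemma pa_graph (phi : PAssign) : pa (graph phi) = phi := by
  funext v
  cases h : phi v with
  | none =>
      unfold pa
      rw [dif_neg]
      rintro ⟨b, hb⟩
      simp only [graph, Set.mem_setOf_eq] at hb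
      rw [h] at hb; exact absurd hb (by simp)
  | some b => exact (pa_some (func_graph phi)).mpr (by simp [graph, h])

lemma comp_autarky {F : CNF} {psi phi : PAssign}
    (hpsi : Autarky psi F) (hphi : Autarky phi F) : Autarky (comp psi phi) F := by
  intro C hC htouch
  by_cases hT : touches psi C
  · obtain ⟨l, hl, he⟩ := hpsi C hC hT
    exact ⟨l, hl, comp_eq_of_some he⟩
  · have hnone : ∀ l ∈ C, psi l.1 = none := by
      intro l hl
      by_contra h
      exact hT ⟨l, hl, h⟩
    have htphi : touches phi C := by
      obtain ⟨l, hl, hne⟩ := htouch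
      rw [comp_eq_of_none (hnone l hl)] at hne
      exact ⟨l, hl, hne⟩
    obtain ⟨l, hl, he⟩ := hphi C hC htphi
    exact ⟨l, hl, by rw [comp_eq_of_none (hnone l hl)]; exact he⟩

lemma exists_max_autarky (F : CNF) :
    ∃ Phi : PAssign, Autarky Phi F ∧
      ∀ psi : PAssign, Autarky psi F → ∀ C ∈ F, psat psi C → psat Phi C := by
  set S : Set (Set Lit) := {s | Func s ∧ Autarky (pa s) F} with hS
  have hcond : ∀ c ⊆ S, IsChain (· ⊆ ·) c → ∃ ub ∈ S, ∀ s ∈ c, s ⊆ ub := by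
    intro c hcS hchain
    have hfun : Func (⋃₀ c) := by
      intro v b b' hb hb'
      obtain ⟨s, hs, hbs⟩ := hb
      obtain ⟨s', hs', hbs'⟩ := hb'
      rcases hchain.total hs hs' with h | h
      · exact (hcS hs').1 v b b' (h hbs) hbs'
      · exact (hcS hs).1 v b b' hbs (h hbs')
    refine ⟨⋃₀ c, ⟨hfun, ?_⟩, fun s hs => Set.subset_sUnion_of_mem hs⟩
    intro C hC htouch
    obtain ⟨l, hl, hne⟩ := htouch
    obtain ⟨b, hb⟩ := pa_ne_none.mp hne
    obtain ⟨s, hs, hbs⟩ := hb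
    have hsF : Autarky (pa s) F := (hcS hs).2
    have ht : touches (pa s) C := ⟨l, hl, pa_ne_none.mpr ⟨b, hbs⟩⟩
    obtain ⟨l', hl', he⟩ := hsF C hC ht
    have hmem : (l'.1, l'.2) ∈ s := (pa_some (hcS hs).1).mp he
    exact ⟨l', hl', (pa_some hfun).mpr ⟨s, hs, hmem⟩⟩
  obtain ⟨m, hm⟩ := zorn_subset S hcond
  have hmS : m ∈ S := hm.prop
  refine ⟨pa m, hmS.2, ?_⟩
  intro psi hpsi C hC hps
  set chi := comp (pa m) psi with hchi
  have hchiA : Autarky chi F := comp_autarky hmS.2 hpsi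
  have hgS : graph chi ∈ S := ⟨func_graph chi, by rw [pa_graph]; exact hchiA⟩
  have hsub : m ⊆ graph chi := by
    rintro ⟨v, b⟩ hvb
    have : pa m v = some b := (pa_some hmS.1).mpr hvb
    simpa [graph] using comp_eq_of_some (phi := psi) this
  have heq : graph chi = m := subset_antisymm (hm.2 hgS hsub) hsub
  -- chi = pa m
  have hchieq : ∀ v, chi v = pa m v := by
    intro v
    cases h : chi v with
    | none =>
        cases h2 : pa m v with
        | none => rfl
        | some b =>
            have : (v, b) ∈ m := (pa_some hmS.1).mp h2
            rw [← heq] at this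
            simp only [graph, Set.mem_setOf_eq] at this
            rw [h] at this; exact absurd this (by simp)
    | some b =>
        have : (v, b) ∈ graph chi := by simp [graph, h]
        rw [heq] at this
        exact ((pa_some hmS.1).mpr this).symm
  obtain ⟨l, hl, he⟩ := hps
  have htm : touches (pa m) C := by
    refine ⟨l, hl, fun h2 => ?_⟩
    have h3 : chi l.1 = none := (hchieq l.1).trans h2
    rw [hchi, comp_eq_of_none h2, he] at h3
    exact absurd h3 (by simp)
  exact hmS.2 C hC htm
end AutAux

theorem lean_iff_no_autarky_satisfies (F : CNF) :
    (IsLean F ↔ ∀ C ∈ F, ∀ phi : PAssign, Autarky phi F → ¬ psat phi C) ∧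
    leanKernel F = {C ∈ F | ∀ phi : PAssign, Autarky phi F → ¬ psat phi C} := by
  open AutAux in
  have part1 : IsLean F ↔ ∀ C ∈ F, ∀ phi : PAssign, Autarky phi F → ¬ psat phi C := by
    constructor
    · intro hlean C hC phi hphi hps
      obtain ⟨l, hl, he⟩ := hps
      have hv : l.1 ∈ varsOf F := ⟨C, hC, l, hl, rfl⟩
      rw [hlean phi hphi l.1 hv] at he
      exact absurd he (by simp)
    · intro h phi hphi v hv
      obtain ⟨C, hC, l, hl, hlv⟩ := hv
      by_contra hne
      exact h C hC phi hphi (hphi C hC ⟨l, hl, hlv ▸ hne⟩)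
  refine ⟨part1, ?_⟩
  open AutAux in
  set K : CNF := {C ∈ F | ∀ phi : PAssign, Autarky phi F → ¬ psat phi C} with hK
  have hKF : K ⊆ F := fun C hC => hC.1
  apply subset_antisymm
  · -- leanKernel F ⊆ K
    rintro C ⟨G, ⟨hGF, hGlean⟩, hCG⟩
    refine ⟨hGF hCG, ?_⟩
    intro phi hphi hps
    obtain ⟨l, hl, he⟩ := hps
    have hv : l.1 ∈ varsOf G := ⟨C, hCG, l, hl, rfl⟩
    have hres : Autarky (restrict phi (varsOf G)) G := restrict_autarky hGF hphi
    have := hGlean _ hres l.1 hv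
    rw [restrict_mem hv, he] at this
    exact absurd this (by simp)
  · -- K ⊆ leanKernel F
    intro C hC
    refine ⟨K, ⟨hKF, ?_⟩, hC⟩
    -- IsLean K
    obtain ⟨Phi, hPhiA, hPhiMax⟩ := exists_max_autarky F
    have hPhiK : ∀ v ∈ varsOf K, Phi v = none := by
      intro v hv
      obtain ⟨C', hC', l, hl, hlv⟩ := hv
      by_contra hne
      exact hC'.2 Phi hPhiA (hPhiA C' (hKF hC') ⟨l, hl, hlv ▸ hne⟩)
    intro phi0 hphi0 v hv
    set phi0' := restrict phi0 (varsOf K) with hphi0'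
    have hphi0'A : Autarky phi0' K := restrict_autarky (le_refl K) hphi0
    set chi := comp Phi phi0' with hchi
    have hchiA : Autarky chi F := by
      intro C'' hC'' htouch
      by_cases hT : touches Phi C''
      · obtain ⟨l, hl, he⟩ := hPhiA C'' hC'' hT
        exact ⟨l, hl, comp_eq_of_some he⟩
      · have hnone : ∀ l ∈ C'', Phi l.1 = none := by
          intro l hl; by_contra h; exact hT ⟨l, hl, h⟩
        have hCK : C'' ∈ K := by
          refine ⟨hC'', ?_⟩
          intro psi hpsi hps
          exact hT (psat_touches (hPhiMax psi hpsi C'' hC'' hps))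
        have ht0 : touches phi0' C'' := by
          obtain ⟨l, hl, hne⟩ := htouch
          rw [hchi, comp_eq_of_none (hnone l hl)] at hne
          exact ⟨l, hl, hne⟩
        obtain ⟨l, hl, he⟩ := hphi0'A C'' hCK ht0
        exact ⟨l, hl, by rw [hchi, comp_eq_of_none (hnone l hl)]; exact he⟩
    by_contra hne
    obtain ⟨C', hC', l, hl, hlv⟩ := hv
    have hvK : v ∈ varsOf K := ⟨C', hC', l, hl, hlv⟩
    have hchiv : chi v ≠ none := by
      rw [hchi, comp_eq_of_none (hPhiK v hvK), hphi0', restrict_mem hvK]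
      exact hne
    have : touches chi C' := ⟨l, hl, hlv ▸ hchiv⟩
    exact hC'.2 chi hchiA (hchiA C' (hKF hC') this)
end

section
/- If σ is a symmetry of a CNF formula F (a permutation of literals commuting with negation that maps F to itself), and F is satisfiable, then F ∧ Φ is satisfiable, where Φ is any symmetry-breaking formula with the property that for every total assignment θ there exists an element g of the symmetry group with g(θ) satisfying Φ. Hence F and F ∧ Φ are satisfiability-equivalent. -/
/-- Negation of a literal. -/
def negL (l : Lit) : Lit := (l.1, !l.2)
/-- σ is a symmetry of F: a permutation of literals commuting with negation mapping F to itself. -/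
def IsSym (sigma : Lit ≃ Lit) (F : CNF) : Prop :=
  (∀ l : Lit, sigma (negL l) = negL (sigma l)) ∧ (fun C : Clause => (sigma : Lit → Lit) '' C) '' F = F
/-- Action of a literal permutation on total assignments: (σθ)(σℓ) = θ(ℓ). -/
def actA (sigma : Lit ≃ Lit) (theta : Var → Bool) : Var → Bool :=
  fun v => decide (theta (sigma.symm (v, true)).1 = (sigma.symm (v, true)).2)

lemma actA_preserves (sigma : Lit ≃ Lit) (F : CNF) (hs : IsSym sigma F)
    (theta : Var → Bool) (hθ : ∀ C ∈ F, csat theta C) :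
    ∀ C ∈ F, csat (actA sigma theta) C := by
  intro C hC
  obtain ⟨hcomm, himg⟩ := hs
  rw [← himg] at hC
  obtain ⟨C', hC'F, rfl⟩ := hC
  obtain ⟨l, hl, hθl⟩ := hθ C' hC'F
  refine ⟨sigma l, ⟨l, hl, rfl⟩, ?_⟩
  rcases hb : (sigma l).2 with _ | _
  · have h1 : ((sigma l).1, true) = negL (sigma l) := by simp [negL, hb]
    have h2 : sigma.symm ((sigma l).1, true) = negL l := by
      rw [h1, ← hcomm]; simp
    simp [actA, h2, negL, hθl, hb]
  · have h2 : sigma.symm ((sigma l).1, true) = l := by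
      have : ((sigma l).1, true) = sigma l := by
        rw [← hb]
      rw [this]; simp
    simp [actA, h2, hθl, hb]

theorem symmetry_breaker_satEquiv (F Phi : CNF) (G : Set (Lit ≃ Lit))
    (hG : ∀ sigma ∈ G, IsSym sigma F)
    (hbrk : ∀ theta : Var → Bool, ∃ g ∈ G, ∀ C ∈ Phi, csat (actA g theta) C) :
    (Sat F → Sat (F ∪ Phi)) ∧ (Sat F ↔ Sat (F ∪ Phi))  := by
  have key : Sat F → Sat (F ∪ Phi) := by
    rintro ⟨theta, hθ⟩
    obtain ⟨g, hgG, hgΦ⟩ := hbrk theta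
    refine ⟨actA g theta, ?_⟩
    intro C hC
    rcases hC with hC | hC
    · exact actA_preserves g F (hG g hgG) theta hθ C hC
    · exact hgΦ C hC
  refine ⟨key, ⟨key, ?_⟩⟩
  rintro ⟨theta, hθ⟩
  exact ⟨theta, fun C hC => hθ C (Or.inl hC)⟩
end

section
/- The autarkies of a CNF formula F form a monoid under composition: composition of autarkies is associative on the induced total override operations, the empty assignment is the identity, and the set of autarkies is closed under composition. -/
theorem autarky_monoid (F : CNF) :
    (∀ phi psi : PAssign, Autarky phi F → Autarky psi F → Autarky (comp psi phi) F) ∧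
    (∀ phi psi chi : PAssign, comp chi (comp psi phi) = comp (comp chi psi) phi) ∧
    (∀ phi : PAssign, comp phi emptyPA = phi ∧ comp emptyPA phi = phi) ∧
    Autarky emptyPA F := by
  refine ⟨?_, ?_, ?_, ?_⟩
  · intro phi psi hphi hpsi C hC ⟨l, hl, hne⟩
    by_cases hp : psi l.1 = none
    · have hphi' : phi l.1 ≠ none := by
        simpa [comp, hp] using hne
      by_cases htpsi : touches psi C
      · obtain ⟨l', hl', heq⟩ := hpsi C hC htpsi
        exact ⟨l', hl', by simp [comp, heq]⟩
      · obtain ⟨l', hl', heq⟩ := hphi C hC ⟨l, hl, hphi'⟩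
        have hp' : psi l'.1 = none := by
          by_contra h
          exact htpsi ⟨l', hl', h⟩
        exact ⟨l', hl', by simp [comp, hp', heq]⟩
    · obtain ⟨l', hl', heq⟩ := hpsi C hC ⟨l, hl, hp⟩
      exact ⟨l', hl', by simp [comp, heq]⟩
  · intro phi psi chi
    funext v
    simp only [comp]
    cases chi v <;> cases psi v <;> rfl
  · intro phi
    constructor <;> (funext v; cases h : phi v <;> simp [comp, emptyPA, h])
  · intro C _ ⟨l, _, hne⟩
    exact absurd rfl hne
end
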